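/- Suppose the switched Markov jump linear system (𝒢,Π,Ψ) is uniformly exponentially mean square stable with constants c ≥ 1 and 0 ≤ λ < 1, and let M ∈ ℕ₀ satisfy c λ^{M+2} < 1. For each ψ ∈ Ψ define Y_ψ(i,k) := Σ_{j=k}^{k+M+1} G_ψ(i,k,j). Then for all i ∈ 𝒩 and all k ∈ ℕ₀: (a) I ≤ Y_ψ(i,k) ≤ (c/(1−λ)) I, and (b) A(i)ᵀ Ỹ_ψ(i,k+1) A(i) − Y_ψ(i,k) ≤ −(1 − c λ^{M+2}) I, where Ỹ_ψ(i,k+1) := Σ_{j=1}^{N} π_{ij}(ψ(k+1)) Y_ψ(j,k+1). -/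

import Mathlib

open Matrix
open scoped Classical

noncomputable section

namespace SMJLS

/-- The ordered product `Φ = A(t(d−1)) ⋯ A(t 1) A(t 0)` along a tuple of modes. -/
def pathProd {n N : ℕ} (Am : Fin N → Matrix (Fin n) (Fin n) ℝ) {d : ℕ}
    (t : Fin d → Fin N) : Matrix (Fin n) (Fin n) ℝ :=
  (((List.finRange d).reverse).map fun l => Am (t l)).prod

/-- `Gmat Am Pm ψ i j k` is `E[Φ(k,j)ᵀ Φ(k,j) ∣ θ(j) = i]`, written as the explicit sum over
tuples `(i_j, …, i_{k−1}) ∈ 𝒩^{k−j}` with `i_j = i` of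
`(∏_{l=j+1}^{k−1} π_{i_{l−1} i_l}(ψ(l))) • ΦᵀΦ` where `Φ = A(i_{k−1}) ⋯ A(i_j)`;
by convention it is `I` when `k = j`. -/
def Gmat {n N J : ℕ} (Am : Fin N → Matrix (Fin n) (Fin n) ℝ)
    (Pm : Fin J → Matrix (Fin N) (Fin N) ℝ) (ψ : ℕ → Fin J) (i : Fin N) (j k : ℕ) :
    Matrix (Fin n) (Fin n) ℝ :=
  if k ≤ j then 1
  else
    ∑ t : Fin (k - j - 1 + 1) → Fin N,
      (if t 0 = i then
          ∏ l : Fin (k - j - 1), Pm (ψ (j + (l : ℕ) + 1)) (t l.castSucc) (t l.succ)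
        else 0) • ((pathProd Am t)ᵀ * pathProd Am t)

/-- Exponential mean square stability (of a single switching sequence) with
explicit constants `c` and `lam`:  `G_ψ(i,j,k) ≤ c λ^(k−j) I` in the Loewner order. -/
def EMSSWith {n N J : ℕ} (Am : Fin N → Matrix (Fin n) (Fin n) ℝ)
    (Pm : Fin J → Matrix (Fin N) (Fin N) ℝ) (c lam : ℝ) (ψ : ℕ → Fin J) : Prop :=
  ∀ (i : Fin N) (j k : ℕ), j ≤ k →
    ((c * lam ^ (k - j)) • (1 : Matrix (Fin n) (Fin n) ℝ) - Gmat Am Pm ψ i j k).PosSemidef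

/-- Uniform exponential mean square stability of the switched Markov jump linear system. -/
def UEMSS {n N J : ℕ} (Am : Fin N → Matrix (Fin n) (Fin n) ℝ)
    (Pm : Fin J → Matrix (Fin N) (Fin N) ℝ) (Ψ : Set (ℕ → Fin J)) : Prop :=
  ∃ c lam : ℝ, 1 ≤ c ∧ 0 ≤ lam ∧ lam < 1 ∧ ∀ ψ ∈ Ψ, EMSSWith Am Pm c lam ψ

/-- Probability of the cylinder `{θ(0) = path 0, …, θ(k) = path k}`. -/
def weight {N J : ℕ} (Pm : Fin J → Matrix (Fin N) (Fin N) ℝ) (ψ : ℕ → Fin J)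
    (p0 : Fin N → ℝ) (k : ℕ) (path : Fin (k + 1) → Fin N) : ℝ :=
  p0 (path 0) * ∏ l : Fin k, Pm (ψ ((l : ℕ) + 1)) (path l.castSucc) (path l.succ)

/-- Expectation of a functional `g` of the chain which depends only on `θ(0), …, θ(k)`. -/
def pexp {N J : ℕ} (Pm : Fin J → Matrix (Fin N) (Fin N) ℝ) (ψ : ℕ → Fin J)
    (p0 : Fin N → ℝ) (k : ℕ) (g : (ℕ → Fin N) → ℝ) : ℝ :=
  ∑ path : Fin (k + 1) → Fin N,
    weight Pm ψ p0 k path *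
      g (fun l => path ⟨min l k, Nat.lt_succ_of_le (min_le_right l k)⟩)

/-- A disturbance process is adapted when `w(k)` is measurable with respect to
`σ(θ(0),…,θ(k))`, i.e. `w(k)` is a function of the first `k+1` modes. -/
def Adapted {N m : ℕ} (w : ℕ → (ℕ → Fin N) → Fin m → ℝ) : Prop :=
  ∀ (k : ℕ) (ω ω' : ℕ → Fin N), (∀ l, l ≤ k → ω l = ω' l) → w k ω = w k ω'

/-- State trajectory: `x(k+1) = A(θ(k)) x(k) + B(θ(k)) w(k)`, `x(0) = x0`. -/
def traj {n m N : ℕ} (Am : Fin N → Matrix (Fin n) (Fin n) ℝ)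
    (Bm : Fin N → Matrix (Fin n) (Fin m) ℝ) (x0 : (ℕ → Fin N) → Fin n → ℝ)
    (w : ℕ → (ℕ → Fin N) → Fin m → ℝ) : ℕ → (ℕ → Fin N) → Fin n → ℝ
  | 0, ω => x0 ω
  | k + 1, ω => (Am (ω k)).mulVec (traj Am Bm x0 w k ω) + (Bm (ω k)).mulVec (w k ω)

/-- Error trajectory: `z(k) = C(θ(k)) x(k) + D(θ(k)) w(k)`. -/
def errv {n m p N : ℕ} (Am : Fin N → Matrix (Fin n) (Fin n) ℝ)
    (Bm : Fin N → Matrix (Fin n) (Fin m) ℝ) (Cm : Fin N → Matrix (Fin p) (Fin n) ℝ)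
    (Dm : Fin N → Matrix (Fin p) (Fin m) ℝ) (x0 : (ℕ → Fin N) → Fin n → ℝ)
    (w : ℕ → (ℕ → Fin N) → Fin m → ℝ) (k : ℕ) (ω : ℕ → Fin N) : Fin p → ℝ :=
  (Cm (ω k)).mulVec (traj Am Bm x0 w k ω) + (Dm (ω k)).mulVec (w k ω)

/-- `E[‖v(k)‖²]` for an adapted process `v`. -/
def energy {N J d : ℕ} (Pm : Fin J → Matrix (Fin N) (Fin N) ℝ) (ψ : ℕ → Fin J)
    (p0 : Fin N → ℝ) (v : ℕ → (ℕ → Fin N) → Fin d → ℝ) (k : ℕ) : ℝ :=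
  pexp Pm ψ p0 k (fun ω => v k ω ⬝ᵥ v k ω)

/-- Mean square strict contractiveness with constant `γ` for the single switching
sequence `ψ` : whenever `x(0) = 0`, `‖z‖_{2,e} ≤ γ ‖w‖_{2,e}` for every admissible `w`. -/
def ContractiveWith {n m p N J : ℕ} (Am : Fin N → Matrix (Fin n) (Fin n) ℝ)
    (Bm : Fin N → Matrix (Fin n) (Fin m) ℝ) (Cm : Fin N → Matrix (Fin p) (Fin n) ℝ)
    (Dm : Fin N → Matrix (Fin p) (Fin m) ℝ) (Pm : Fin J → Matrix (Fin N) (Fin N) ℝ)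
    (γ : ℝ) (ψ : ℕ → Fin J) (p0 : Fin N → ℝ) : Prop :=
  ∀ w : ℕ → (ℕ → Fin N) → Fin m → ℝ, Adapted w →
    Summable (fun k => energy Pm ψ p0 w k) →
    Summable (fun k => energy Pm ψ p0 (errv Am Bm Cm Dm (fun _ => 0) w) k) ∧
      ∑' k, energy Pm ψ p0 (errv Am Bm Cm Dm (fun _ => 0) w) k ≤
        γ ^ 2 * ∑' k, energy Pm ψ p0 w k

/-- Uniform mean square strict contractiveness of the switched system. -/
def UMSSC {n m p N J : ℕ} (Am : Fin N → Matrix (Fin n) (Fin n) ℝ)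
    (Bm : Fin N → Matrix (Fin n) (Fin m) ℝ) (Cm : Fin N → Matrix (Fin p) (Fin n) ℝ)
    (Dm : Fin N → Matrix (Fin p) (Fin m) ℝ) (Pm : Fin J → Matrix (Fin N) (Fin N) ℝ)
    (Ψ : Set (ℕ → Fin J)) (p0 : Fin N → ℝ) : Prop :=
  ∃ γ : ℝ, 0 < γ ∧ γ < 1 ∧ ∀ ψ ∈ Ψ, ContractiveWith Am Bm Cm Dm Pm γ ψ p0

/-- Marginal distribution `p(k) = p(0) Π(ψ(1)) ⋯ Π(ψ(k))` of the chain. -/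
def pdist {N J : ℕ} (Pm : Fin J → Matrix (Fin N) (Fin N) ℝ) (ψ : ℕ → Fin J)
    (p0 : Fin N → ℝ) : ℕ → Fin N → ℝ
  | 0 => p0
  | k + 1 => Matrix.vecMul (pdist Pm ψ p0 k) (Pm (ψ (k + 1)))

/-- `ℒ(i,X) = A(i)ᵀ X A(i) + C(i)ᵀ C(i)`. -/
def opL {n p N : ℕ} (Am : Fin N → Matrix (Fin n) (Fin n) ℝ)
    (Cm : Fin N → Matrix (Fin p) (Fin n) ℝ) (i : Fin N) (X : Matrix (Fin n) (Fin n) ℝ) :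
    Matrix (Fin n) (Fin n) ℝ :=
  (Am i)ᵀ * X * Am i + (Cm i)ᵀ * Cm i

/-- `ℛ(i,X) = B(i)ᵀ X A(i) + D(i)ᵀ C(i)`. -/
def opR {n m p N : ℕ} (Am : Fin N → Matrix (Fin n) (Fin n) ℝ)
    (Bm : Fin N → Matrix (Fin n) (Fin m) ℝ) (Cm : Fin N → Matrix (Fin p) (Fin n) ℝ)
    (Dm : Fin N → Matrix (Fin p) (Fin m) ℝ) (i : Fin N) (X : Matrix (Fin n) (Fin n) ℝ) :
    Matrix (Fin m) (Fin n) ℝ :=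
  (Bm i)ᵀ * X * Am i + (Dm i)ᵀ * Cm i

/-- `𝒲(i,X) = I − B(i)ᵀ X B(i) − D(i)ᵀ D(i)`. -/
def opW {n m p N : ℕ} (Bm : Fin N → Matrix (Fin n) (Fin m) ℝ)
    (Dm : Fin N → Matrix (Fin p) (Fin m) ℝ) (i : Fin N) (X : Matrix (Fin n) (Fin n) ℝ) :
    Matrix (Fin m) (Fin m) ℝ :=
  1 - (Bm i)ᵀ * X * Bm i - (Dm i)ᵀ * Dm i

/-- `𝒮(i,X) = ℒ(i,X) + ℛ(i,X)ᵀ 𝒲(i,X)⁻¹ ℛ(i,X)`. -/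
def opS {n m p N : ℕ} (Am : Fin N → Matrix (Fin n) (Fin n) ℝ)
    (Bm : Fin N → Matrix (Fin n) (Fin m) ℝ) (Cm : Fin N → Matrix (Fin p) (Fin n) ℝ)
    (Dm : Fin N → Matrix (Fin p) (Fin m) ℝ) (i : Fin N) (X : Matrix (Fin n) (Fin n) ℝ) :
    Matrix (Fin n) (Fin n) ℝ :=
  opL Am Cm i X + (opR Am Bm Cm Dm i X)ᵀ * (opW Bm Dm i X)⁻¹ * opR Am Bm Cm Dm i X

/-- `ℱ(i,X) = A(i) + B(i) 𝒲(i,X)⁻¹ ℛ(i,X)`. -/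
def opF {n m p N : ℕ} (Am : Fin N → Matrix (Fin n) (Fin n) ℝ)
    (Bm : Fin N → Matrix (Fin n) (Fin m) ℝ) (Cm : Fin N → Matrix (Fin p) (Fin n) ℝ)
    (Dm : Fin N → Matrix (Fin p) (Fin m) ℝ) (i : Fin N) (X : Matrix (Fin n) (Fin n) ℝ) :
    Matrix (Fin n) (Fin n) ℝ :=
  Am i + Bm i * (opW Bm Dm i X)⁻¹ * opR Am Bm Cm Dm i X

/-- Backwards recursion for the perturbed finite-horizon Riccati difference equation,
indexed by the number `d = T + 1 − k` of remaining steps. -/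
def ricAuxE {n m p N J : ℕ} (Am : Fin N → Matrix (Fin n) (Fin n) ℝ)
    (Bm : Fin N → Matrix (Fin n) (Fin m) ℝ) (Cm : Fin N → Matrix (Fin p) (Fin n) ℝ)
    (Dm : Fin N → Matrix (Fin p) (Fin m) ℝ) (Pm : Fin J → Matrix (Fin N) (Fin N) ℝ)
    (ψ : ℕ → Fin J) (T : ℕ) (ε : ℝ) : ℕ → Fin N → Matrix (Fin n) (Fin n) ℝ
  | 0, _ => 0
  | d + 1, i =>
      opS Am Bm Cm Dm i
          (∑ j, Pm (ψ (T - d + 1)) i j • ricAuxE Am Bm Cm Dm Pm ψ T ε d j) + ε • 1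

/-- The perturbed finite-horizon Riccati solution `X_ψ(i,k,T,ε)`:
`X_ψ(i,T+1,T,ε) = 0` and `X_ψ(i,k,T,ε) = 𝒮(i, X̃_ψ(i,k+1,T,ε)) + εI` where
`X̃_ψ(i,k+1,T,ε) = Σ_j π_{ij}(ψ(k+1)) X_ψ(j,k+1,T,ε)`. -/
def ricE {n m p N J : ℕ} (Am : Fin N → Matrix (Fin n) (Fin n) ℝ)
    (Bm : Fin N → Matrix (Fin n) (Fin m) ℝ) (Cm : Fin N → Matrix (Fin p) (Fin n) ℝ)
    (Dm : Fin N → Matrix (Fin p) (Fin m) ℝ) (Pm : Fin J → Matrix (Fin N) (Fin N) ℝ)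
    (ψ : ℕ → Fin J) (i : Fin N) (k T : ℕ) (ε : ℝ) : Matrix (Fin n) (Fin n) ℝ :=
  ricAuxE Am Bm Cm Dm Pm ψ T ε (T + 1 - k) i

/-- The (unperturbed) finite-horizon Riccati solution `X_ψ(i,k,T)`. -/
def ric {n m p N J : ℕ} (Am : Fin N → Matrix (Fin n) (Fin n) ℝ)
    (Bm : Fin N → Matrix (Fin n) (Fin m) ℝ) (Cm : Fin N → Matrix (Fin p) (Fin n) ℝ)
    (Dm : Fin N → Matrix (Fin p) (Fin m) ℝ) (Pm : Fin J → Matrix (Fin N) (Fin N) ℝ)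
    (ψ : ℕ → Fin J) (i : Fin N) (k T : ℕ) : Matrix (Fin n) (Fin n) ℝ :=
  ricE Am Bm Cm Dm Pm ψ i k T 0

/-- `ℬ(i,X,Y) = [[A,B],[C,D]]ᵀ diag(X,I) [[A,B],[C,D]] − diag(Y,I)`. -/
def bigB {n m p N : ℕ} (Am : Fin N → Matrix (Fin n) (Fin n) ℝ)
    (Bm : Fin N → Matrix (Fin n) (Fin m) ℝ) (Cm : Fin N → Matrix (Fin p) (Fin n) ℝ)
    (Dm : Fin N → Matrix (Fin p) (Fin m) ℝ) (i : Fin N)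
    (X Y : Matrix (Fin n) (Fin n) ℝ) : Matrix (Fin n ⊕ Fin m) (Fin n ⊕ Fin m) ℝ :=
  (Matrix.fromBlocks (Am i) (Bm i) (Cm i) (Dm i))ᵀ *
      Matrix.fromBlocks X 0 0 (1 : Matrix (Fin p) (Fin p) ℝ) *
      Matrix.fromBlocks (Am i) (Bm i) (Cm i) (Dm i) -
    Matrix.fromBlocks Y 0 0 (1 : Matrix (Fin m) (Fin m) ℝ)

/-- The switching window `ψ_M(k) = (ψ(k+1), …, ψ(k+M))`. -/
def window {J : ℕ} (ψ : ℕ → Fin J) (M k : ℕ) : Fin M → Fin J :=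
  fun l => ψ (k + (l : ℕ) + 1)

/-- `Ψ_M`, the set of all windows of length `M` occurring in `Ψ`. -/
def windowSet {J : ℕ} (Ψ : Set (ℕ → Fin J)) (M : ℕ) : Set (Fin M → Fin J) :=
  { r | ∃ ψ ∈ Ψ, ∃ t : ℕ, r = window ψ M t }

/-- Closed-loop matrix `ℱ(i, X̃_ψ(i, l+1, T, ε))` at time `l`. -/
def Fcl {n m p N J : ℕ} (Am : Fin N → Matrix (Fin n) (Fin n) ℝ)
    (Bm : Fin N → Matrix (Fin n) (Fin m) ℝ) (Cm : Fin N → Matrix (Fin p) (Fin n) ℝ)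
    (Dm : Fin N → Matrix (Fin p) (Fin m) ℝ) (Pm : Fin J → Matrix (Fin N) (Fin N) ℝ)
    (ψ : ℕ → Fin J) (T : ℕ) (ε : ℝ) (i : Fin N) (l : ℕ) : Matrix (Fin n) (Fin n) ℝ :=
  opF Am Bm Cm Dm i (∑ j, Pm (ψ (l + 1)) i j • ricE Am Bm Cm Dm Pm ψ j (l + 1) T ε)

/-- Ordered closed-loop product `φ = F(t(d−1), j+d−1) ⋯ F(t 0, j)`. -/
def clPathProd {n N : ℕ} (F : Fin N → ℕ → Matrix (Fin n) (Fin n) ℝ) (j : ℕ) {d : ℕ}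
    (t : Fin d → Fin N) : Matrix (Fin n) (Fin n) ℝ :=
  (((List.finRange d).reverse).map fun l => F (t l) (j + (l : ℕ))).prod

/-- Closed-loop conditional second moment `H_ψ(i,j,k,T,ε)`. -/
def Hmat {n m p N J : ℕ} (Am : Fin N → Matrix (Fin n) (Fin n) ℝ)
    (Bm : Fin N → Matrix (Fin n) (Fin m) ℝ) (Cm : Fin N → Matrix (Fin p) (Fin n) ℝ)
    (Dm : Fin N → Matrix (Fin p) (Fin m) ℝ) (Pm : Fin J → Matrix (Fin N) (Fin N) ℝ)
    (ψ : ℕ → Fin J) (T : ℕ) (ε : ℝ) (i : Fin N) (j k : ℕ) :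
    Matrix (Fin n) (Fin n) ℝ :=
  if k ≤ j then 1
  else
    ∑ t : Fin (k - j - 1 + 1) → Fin N,
      (if t 0 = i then
          ∏ l : Fin (k - j - 1), Pm (ψ (j + (l : ℕ) + 1)) (t l.castSucc) (t l.succ)
        else 0) •
        ((clPathProd (Fcl Am Bm Cm Dm Pm ψ T ε) j t)ᵀ *
          clPathProd (Fcl Am Bm Cm Dm Pm ψ T ε) j t)

/-- `Y_ψ(i,k) = Σ_{j=k}^{k+M+1} E[Φ(j,k)ᵀΦ(j,k) ∣ θ(k)=i]`. -/
def Ysum {n N J : ℕ} (Am : Fin N → Matrix (Fin n) (Fin n) ℝ)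
    (Pm : Fin J → Matrix (Fin N) (Fin N) ℝ) (ψ : ℕ → Fin J) (M : ℕ) (i : Fin N)
    (k : ℕ) : Matrix (Fin n) (Fin n) ℝ :=
  ∑ j ∈ Finset.range (M + 2), Gmat Am Pm ψ i k (k + j)


section Aux

variable {n N J : ℕ} (Am : Fin N → Matrix (Fin n) (Fin n) ℝ)
  (Pm : Fin J → Matrix (Fin N) (Fin N) ℝ) (ψ : ℕ → Fin J)

lemma psd_smul {a : ℝ} {M : Matrix (Fin n) (Fin n) ℝ} (ha : 0 ≤ a) (hM : M.PosSemidef) :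
    (a • M).PosSemidef := by
  constructor
  · show (a • M)ᴴ = a • M
    rw [Matrix.conjTranspose_smul, hM.1.eq, star_trivial]
  · intro x
    exact (hM.smul ha).2 x

lemma psd_sum {α : Type*} (s : Finset α) (f : α → Matrix (Fin n) (Fin n) ℝ)
    (h : ∀ a ∈ s, (f a).PosSemidef) : (∑ a ∈ s, f a).PosSemidef := by
  induction s using Finset.induction with
  | empty => simpa using Matrix.PosSemidef.zero
  | @insert a s ha ih =>
    rw [Finset.sum_insert ha]
    exact (h a (Finset.mem_insert_self a s)).add (ih fun b hb => h b (Finset.mem_insert_of_mem hb))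

lemma transpose_eq_conjTranspose {k m : ℕ} (A : Matrix (Fin k) (Fin m) ℝ) : Aᵀ = Aᴴ := by
  ext i j; simp [Matrix.conjTranspose_apply]

lemma psd_transmul {k : ℕ} (A : Matrix (Fin k) (Fin n) ℝ) : (Aᵀ * A).PosSemidef := by
  rw [transpose_eq_conjTranspose]; exact Matrix.posSemidef_conjTranspose_mul_self A

lemma pathProd_succ {d : ℕ} (t : Fin (d + 1) → Fin N) :
    pathProd Am t = pathProd Am (fun l => t l.succ) * Am (t 0) := by
  rw [pathProd, pathProd, List.finRange_succ]
  simp [List.map_reverse, List.map_map]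
  rfl

/-- Explicit form of `Gmat` in the nontrivial case, with the tuple length as a parameter. -/
def Gaux (i : Fin N) (j e : ℕ) : Matrix (Fin n) (Fin n) ℝ :=
  ∑ t : Fin (e + 1) → Fin N,
    (if t 0 = i then
        ∏ l : Fin e, Pm (ψ (j + (l : ℕ) + 1)) (t l.castSucc) (t l.succ)
      else 0) • ((pathProd Am t)ᵀ * pathProd Am t)

lemma gmat_eq {i : Fin N} {j k : ℕ} (h : j < k) :
    Gmat Am Pm ψ i j k = Gaux Am Pm ψ i j (k - j - 1) := by
  rw [Gmat, if_neg (by omega)]; rfl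

lemma gaux_zero (i : Fin N) (j : ℕ) : Gaux Am Pm ψ i j 0 = (Am i)ᵀ * Am i := by
  rw [Gaux]
  rw [Fintype.sum_equiv (Equiv.funUnique (Fin 1) (Fin N)) _
    (fun b => (if b = i then (1:ℝ) else 0) • ((Am b)ᵀ * Am b)) ?_]
  · simp
  · intro t
    have hp : pathProd Am t = Am (t 0) := by
      rw [pathProd]; simp [List.finRange_succ]
    simp [hp, Equiv.funUnique]

lemma gaux_succ (i : Fin N) (j e : ℕ) :
    Gaux Am Pm ψ i j (e + 1) =
      ∑ j', Pm (ψ (j + 1)) i j' • ((Am i)ᵀ * Gaux Am Pm ψ j' (j + 1) e * Am i) := by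
  rw [Gaux]
  rw [← Fintype.sum_equiv (Fin.consEquiv fun _ : Fin (e + 2) => Fin N)
    (fun p : Fin N × (Fin (e + 1) → Fin N) =>
      (if (Fin.cons p.1 p.2 : Fin (e+2) → Fin N) 0 = i then
          ∏ l : Fin (e + 1), Pm (ψ (j + (l : ℕ) + 1))
            ((Fin.cons p.1 p.2 : Fin (e+2) → Fin N) l.castSucc)
            ((Fin.cons p.1 p.2 : Fin (e+2) → Fin N) l.succ)
        else 0) •
        ((pathProd Am (Fin.cons p.1 p.2 : Fin (e+2) → Fin N))ᵀ *
          pathProd Am (Fin.cons p.1 p.2 : Fin (e+2) → Fin N))) _ (fun p => rfl)]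
  rw [Fintype.sum_prod_type]
  have harg : ∀ l : ℕ, j + (l + 1) + 1 = j + 1 + l + 1 := by omega
  have key : ∀ (j' : Fin N) (s : Fin (e + 1) → Fin N),
      (if (Fin.cons j' s : Fin (e+2) → Fin N) 0 = i then
          ∏ l : Fin (e + 1), Pm (ψ (j + (l : ℕ) + 1))
            ((Fin.cons j' s : Fin (e+2) → Fin N) l.castSucc)
            ((Fin.cons j' s : Fin (e+2) → Fin N) l.succ)
        else 0) •
        ((pathProd Am (Fin.cons j' s : Fin (e+2) → Fin N))ᵀ *
          pathProd Am (Fin.cons j' s : Fin (e+2) → Fin N)) =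
      (if j' = i then Pm (ψ (j + 1)) j' (s 0) *
          ∏ l : Fin e, Pm (ψ (j + 1 + (l : ℕ) + 1)) (s l.castSucc) (s l.succ)
        else 0) •
        ((Am j')ᵀ * ((pathProd Am s)ᵀ * pathProd Am s) * Am j') := by
    intro j' s
    have hp : pathProd Am (Fin.cons j' s : Fin (e+2) → Fin N) = pathProd Am s * Am j' := by
      rw [pathProd_succ]
      simp [Fin.cons_succ, Fin.cons_zero]
    have hprod : ∏ l : Fin (e + 1), Pm (ψ (j + (l : ℕ) + 1))
        ((Fin.cons j' s : Fin (e+2) → Fin N) l.castSucc)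
        ((Fin.cons j' s : Fin (e+2) → Fin N) l.succ) =
        Pm (ψ (j + 1)) j' (s 0) *
          ∏ l : Fin e, Pm (ψ (j + 1 + (l : ℕ) + 1)) (s l.castSucc) (s l.succ) := by
      rw [Fin.prod_univ_succ]
      simp only [Fin.cons_succ, Fin.castSucc_zero, Fin.cons_zero, Fin.val_zero,
        Nat.add_zero, Fin.val_succ]
      congr 1
      apply Finset.prod_congr rfl
      intro x _
      have h1 : (Fin.cons j' s : Fin (e + 2) → Fin N) (Fin.succ x).castSucc = s x.castSucc := by
        have h2 : ((Fin.succ x).castSucc : Fin (e + 2)) = (Fin.castSucc x).succ := by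
          ext; simp
        rw [h2, Fin.cons_succ]
      rw [h1, harg (x : ℕ)]
    rw [hprod, hp]
    simp only [Fin.cons_zero, Matrix.transpose_mul, Matrix.mul_assoc]
  simp only [key]
  trans (∑ s : Fin (e + 1) → Fin N,
      (Pm (ψ (j + 1)) i (s 0) *
          ∏ l : Fin e, Pm (ψ (j + 1 + (l : ℕ) + 1)) (s l.castSucc) (s l.succ)) •
        ((Am i)ᵀ * ((pathProd Am s)ᵀ * pathProd Am s) * Am i))
  · rw [Finset.sum_comm]
    apply Finset.sum_congr rfl
    intro s _
    simp [ite_smul]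
  · symm
    simp only [Gaux, Matrix.mul_sum, Matrix.sum_mul, Finset.smul_sum,
      Matrix.mul_smul, Matrix.smul_mul, smul_smul, ite_smul, zero_smul, smul_zero,
      mul_ite, mul_zero, mul_one]
    rw [Finset.sum_comm]
    apply Finset.sum_congr rfl
    intro s _
    simp [Finset.sum_ite_eq, Matrix.mul_assoc, smul_smul]

lemma gaux_psd (hPnn : ∀ (s : Fin J) (i j : Fin N), 0 ≤ Pm s i j) (i : Fin N) (j e : ℕ) :
    (Gaux Am Pm ψ i j e).PosSemidef := by
  apply psd_sum
  intro t _
  apply psd_smul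
  · split
    · exact Finset.prod_nonneg fun l _ => hPnn _ _ _
    · exact le_refl 0
  · exact psd_transmul _

lemma gmat_psd (hPnn : ∀ (s : Fin J) (i j : Fin N), 0 ≤ Pm s i j) (i : Fin N) (j k : ℕ) :
    (Gmat Am Pm ψ i j k).PosSemidef := by
  by_cases h : k ≤ j
  · rw [Gmat, if_pos h]; exact Matrix.PosSemidef.one
  · rw [gmat_eq Am Pm ψ (by omega)]
    exact gaux_psd Am Pm ψ hPnn _ _ _

lemma gmat_rec (hProw : ∀ (s : Fin J) (i : Fin N), ∑ j, Pm s i j = 1) (i : Fin N) (k d : ℕ) :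
    Gmat Am Pm ψ i k (k + 1 + d) =
      ∑ j', Pm (ψ (k + 1)) i j' • ((Am i)ᵀ * Gmat Am Pm ψ j' (k + 1) (k + 1 + d) * Am i) := by
  cases d with
  | zero =>
    rw [gmat_eq Am Pm ψ (by omega : k < k + 1 + 0)]
    have he : k + 1 + 0 - k - 1 = 0 := by omega
    rw [he, gaux_zero]
    have h1 : ∀ j' : Fin N, Gmat Am Pm ψ j' (k + 1) (k + 1 + 0) = 1 := by
      intro j'; rw [Gmat, if_pos (by omega)]
    simp only [h1, Matrix.mul_one, ← Finset.sum_smul, hProw, one_smul]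
  | succ e =>
    rw [gmat_eq Am Pm ψ (by omega : k < k + 1 + (e + 1))]
    have he : k + 1 + (e + 1) - k - 1 = e + 1 := by omega
    rw [he, gaux_succ]
    apply Finset.sum_congr rfl
    intro j' _
    rw [gmat_eq Am Pm ψ (by omega : k + 1 < k + 1 + (e + 1))]
    have he2 : k + 1 + (e + 1) - (k + 1) - 1 = e := by omega
    rw [he2]

lemma tele_sum (f : ℕ → Matrix (Fin n) (Fin n) ℝ) (m : ℕ) :
    (∑ j ∈ Finset.range (m + 1), f j) - (∑ j ∈ Finset.range (m + 1), f (j + 1)) =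
      f 0 - f (m + 1) := by
  rw [Finset.sum_range_succ' f m, Finset.sum_range_succ (fun j => f (j + 1)) m]
  abel

end Aux

/-- (Lemma 1.) If the switched system is UEMSS with constants `c, λ` and
`M` satisfies `c λ^{M+2} < 1`, then `Y_ψ(i,k) := Σ_{j=k}^{k+M+1} G_ψ(i,k,j)` satisfies
`I ≤ Y_ψ(i,k) ≤ (c/(1−λ)) I` and
`A(i)ᵀ Ỹ_ψ(i,k+1) A(i) − Y_ψ(i,k) ≤ −(1 − c λ^{M+2}) I` for all `i` and `k`, where
`Ỹ_ψ(i,k+1) = Σ_j π_{ij}(ψ(k+1)) Y_ψ(j,k+1)`. -/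
theorem statement2 (n N J : ℕ) (Am : Fin N → Matrix (Fin n) (Fin n) ℝ)
    (Pm : Fin J → Matrix (Fin N) (Fin N) ℝ) (Ψ : Set (ℕ → Fin J)) (hΨ : Ψ.Nonempty)
    (hPnn : ∀ (s : Fin J) (i j : Fin N), 0 ≤ Pm s i j)
    (hProw : ∀ (s : Fin J) (i : Fin N), ∑ j, Pm s i j = 1)
    (c lam : ℝ) (hc : 1 ≤ c) (hlam0 : 0 ≤ lam) (hlam1 : lam < 1)
    (hstab : ∀ ψ ∈ Ψ, EMSSWith Am Pm c lam ψ)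
    (M : ℕ) (hM : c * lam ^ (M + 2) < 1) :
    ∀ ψ ∈ Ψ, ∀ (i : Fin N) (k : ℕ),
      (Ysum Am Pm ψ M i k - 1).PosSemidef ∧
      ((c / (1 - lam)) • (1 : Matrix (Fin n) (Fin n) ℝ) - Ysum Am Pm ψ M i k).PosSemidef ∧
      (Ysum Am Pm ψ M i k -
        (Am i)ᵀ * (∑ j, Pm (ψ (k + 1)) i j • Ysum Am Pm ψ M j (k + 1)) * Am i -
        (1 - c * lam ^ (M + 2)) • 1).PosSemidef := by
  intro ψ hψ i k
  have hS := hstab ψ hψ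
  have hGpsd : ∀ (i' : Fin N) (a b : ℕ), (Gmat Am Pm ψ i' a b).PosSemidef :=
    fun i' a b => gmat_psd Am Pm ψ hPnn i' a b
  have hG0 : ∀ (i' : Fin N) (a : ℕ), Gmat Am Pm ψ i' a a = 1 := fun i' a => by
    rw [Gmat, if_pos le_rfl]
  have h1lam : 0 < 1 - lam := by linarith
  refine ⟨?_, ?_, ?_⟩
  · have hY : Ysum Am Pm ψ M i k - 1 =
        ∑ j ∈ Finset.range (M + 1), Gmat Am Pm ψ i k (k + (j + 1)) := by
      rw [Ysum, Finset.sum_range_succ']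
      simp [hG0]
    rw [hY]
    exact psd_sum _ _ fun j _ => hGpsd _ _ _
  · have hr : 0 ≤ c / (1 - lam) - ∑ j ∈ Finset.range (M + 2), c * lam ^ j := by
      rw [← Finset.mul_sum, geom_sum_eq (by linarith) (M + 2)]
      have hpow : 0 ≤ lam ^ (M + 2) := pow_nonneg hlam0 _
      have e1 : (lam ^ (M + 2) - 1) / (lam - 1) = (1 - lam ^ (M + 2)) / (1 - lam) := by
        rw [div_eq_div_iff (sub_ne_zero.mpr (ne_of_lt hlam1)) (ne_of_gt h1lam)]
        ring
      rw [e1, ← mul_div_assoc, div_sub_div_same]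
      have e2 : c - c * (1 - lam ^ (M + 2)) = c * lam ^ (M + 2) := by ring
      rw [e2]
      exact div_nonneg (mul_nonneg (by linarith) hpow) (le_of_lt h1lam)
    have hYid : (c / (1 - lam)) • (1 : Matrix (Fin n) (Fin n) ℝ) - Ysum Am Pm ψ M i k =
        (∑ j ∈ Finset.range (M + 2),
          ((c * lam ^ j) • (1 : Matrix (Fin n) (Fin n) ℝ) - Gmat Am Pm ψ i k (k + j))) +
          (c / (1 - lam) - ∑ j ∈ Finset.range (M + 2), c * lam ^ j) • 1 := by
      rw [Finset.sum_sub_distrib, ← Finset.sum_smul, sub_smul, Ysum]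
      abel
    rw [hYid]
    apply Matrix.PosSemidef.add
    · apply psd_sum
      intro j _
      have h := hS i k (k + j) (by omega)
      have h' : k + j - k = j := by omega
      rw [h'] at h
      exact h
    · exact psd_smul hr Matrix.PosSemidef.one
  · have hAYA : (Am i)ᵀ * (∑ j, Pm (ψ (k + 1)) i j • Ysum Am Pm ψ M j (k + 1)) * Am i =
        ∑ d ∈ Finset.range (M + 2), Gmat Am Pm ψ i k (k + 1 + d) := by
      simp only [Ysum, Finset.smul_sum]
      rw [Finset.sum_comm, Matrix.mul_sum, Matrix.sum_mul]
      apply Finset.sum_congr rfl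
      intro d _
      rw [gmat_rec Am Pm ψ hProw i k d, Matrix.mul_sum, Matrix.sum_mul]
      apply Finset.sum_congr rfl
      intro j _
      rw [Matrix.mul_smul, Matrix.smul_mul]
    have hsum2 : ∑ d ∈ Finset.range (M + 2), Gmat Am Pm ψ i k (k + 1 + d) =
        ∑ d ∈ Finset.range (M + 2), Gmat Am Pm ψ i k (k + (d + 1)) := by
      apply Finset.sum_congr rfl
      intro d _
      have : k + 1 + d = k + (d + 1) := by omega
      rw [this]
    have htel : Ysum Am Pm ψ M i k -
        ∑ d ∈ Finset.range (M + 2), Gmat Am Pm ψ i k (k + 1 + d) =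
        1 - Gmat Am Pm ψ i k (k + (M + 2)) := by
      rw [Ysum, hsum2]
      have := tele_sum (fun j => Gmat Am Pm ψ i k (k + j)) (M + 1)
      simp only [Nat.add_zero] at this
      rw [this, hG0]
    have hfinal : Ysum Am Pm ψ M i k -
        (Am i)ᵀ * (∑ j, Pm (ψ (k + 1)) i j • Ysum Am Pm ψ M j (k + 1)) * Am i -
        (1 - c * lam ^ (M + 2)) • (1 : Matrix (Fin n) (Fin n) ℝ) =
        (c * lam ^ (M + 2)) • (1 : Matrix (Fin n) (Fin n) ℝ) -
          Gmat Am Pm ψ i k (k + (M + 2)) := by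
      rw [hAYA, sub_smul, one_smul, htel]
      abel
    rw [hfinal]
    have h := hS i k (k + (M + 2)) (by omega)
    have h' : k + (M + 2) - k = M + 2 := by omega
    rw [h'] at h
    exact h


end SMJLS
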